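/- Let C ⊂ F^{m-1} be a 1-code and Ċ = {(1,x) : x ∈ C}. Then P(C) := (H_m \ ⋃_{δ∈Ċ}(R_δ + δ̄ − e^{(δ)})) ∪ ⋃_{δ∈Ċ}(R_δ + δ̄) is a 1-perfect code in F^n, and moreover C = { x ∈ F^{m-1} : (1, x, 0^{n-m}) ∈ P(C) }. -/

import Mathlib

variable {F : Type*} [Field F] [Fintype F] [DecidableEq F] {m : ℕ}

def IsProj (α : Fin m → F) : Prop :=
  ∃ i, α i = 1 ∧ ∀ j < i, α j = 0

instance : DecidablePred (IsProj (F := F) (m := m)) :=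
  fun α => decidable_of_iff (∃ i, α i = 1 ∧ ∀ j < i, α j = 0) Iff.rfl

/-- The projective points: nonzero vectors with first nonzero coordinate 1. -/
abbrev PA (F : Type*) [Field F] [Fintype F] [DecidableEq F] (m : ℕ) : Type _ :=
  {α : Fin m → F // IsProj α}

/-- The Hamming code of length (q^m-1)/(q-1). -/
def Hcode (F : Type*) [Field F] [Fintype F] [DecidableEq F] (m : ℕ) : Set (PA F m → F) :=
  {c | ∑ α : PA F m, c α • (α : Fin m → F) = 0}

/-- Zero-extension of a vector of F^m to a word indexed by PA F m. -/
def bar (α : Fin m → F) : PA F m → F :=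
  fun β => ∑ i, if (β : Fin m → F) = Pi.single i 1 then α i else 0

/-- The linear δ-component: span of the weight-3 codewords with value 1 at δ. -/
def Rcomp (δ : PA F m) : Submodule F (PA F m → F) :=
  Submodule.span F {c | c ∈ Hcode F m ∧ hammingNorm c = 3 ∧ c δ = 1}

/-- A 1-perfect code: radius-1 balls around codewords partition the space. -/
def IsPerfect {ι : Type*} [Fintype ι] (P : Set (ι → F)) : Prop :=
  ∀ z : ι → F, ∃! c, c ∈ P ∧ hammingDist z c ≤ 1

/-- A 1-code: radius-1 balls around codewords are pairwise disjoint. -/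
def IsOneCode {ι : Type*} [Fintype ι] (C : Set (ι → F)) : Prop :=
  ∀ x ∈ C, ∀ y ∈ C, x ≠ y → ∀ z, ¬(hammingDist x z ≤ 1 ∧ hammingDist y z ≤ 1)

/-- The radius-1 neighborhood of a set of words. -/
def nbhd {ι : Type*} [Fintype ι] (M : Set (ι → F)) : Set (ι → F) :=
  {y | ∃ x ∈ M, hammingDist x y ≤ 1}

/-- The projective point corresponding to the standard basis vector π^(i). -/
def singleProj (i : Fin m) : PA F m :=
  ⟨Pi.single i 1, i, by simp, fun j hj => Pi.single_eq_of_ne (Fin.ne_of_lt hj) 1⟩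

/-- The projective point (1, x). -/
def consProj {s : ℕ} (x : Fin s → F) : PA F (s+1) :=
  ⟨Fin.cons 1 x, 0, by simp, fun j hj => absurd hj (by simp)⟩

/-- The δ-component of the Hamming code associated with x, for δ = (1,x). -/
def compCoset {s : ℕ} (x : Fin s → F) : Set (PA F (s+1) → F) :=
  (· + (bar (Fin.cons 1 x) - Pi.single (consProj x) 1)) '' (Rcomp (consProj x) : Set (PA F (s+1) → F))

/-- The 1-perfect code P(C) obtained by switching the components indexed by C. -/
def PCode {s : ℕ} (C : Set (Fin s → F)) : Set (PA F (s+1) → F) :=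
  (Hcode F (s+1) \ ⋃ x ∈ C, compCoset x) ∪
    ⋃ x ∈ C, (· + bar (Fin.cons 1 x)) '' (Rcomp (consProj x) : Set (PA F (s+1) → F))

-- ===== auxiliary development =====
-- aux
def synd (c : PA F m → F) : Fin m → F := ∑ α : PA F m, c α • (α : Fin m → F)

lemma mem_Hcode {c : PA F m → F} : c ∈ Hcode F m ↔ synd c = 0 := Iff.rfl

lemma synd_add (c d : PA F m → F) : synd (c + d) = synd c + synd d := by
  simp [synd, add_smul, Finset.sum_add_distrib]

lemma synd_neg (c : PA F m → F) : synd (-c) = - synd c := by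
  simp [synd, neg_smul, Finset.sum_neg_distrib]

lemma synd_sub (c d : PA F m → F) : synd (c - d) = synd c - synd d := by
  simp [sub_eq_add_neg, synd_add, synd_neg]

lemma synd_smul (t : F) (c : PA F m → F) : synd (t • c) = t • synd c := by
  simp [synd, Finset.smul_sum, smul_smul]

def syndL : (PA F m → F) →ₗ[F] (Fin m → F) where
  toFun := synd
  map_add' := synd_add
  map_smul' := synd_smul

lemma synd_sum {κ : Type*} (s : Finset κ) (f : κ → (PA F m → F)) :
    synd (∑ i ∈ s, f i) = ∑ i ∈ s, synd (f i) :=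
  map_sum syndL f s

lemma synd_single (β : PA F m) (t : F) : synd (Pi.single β t) = t • (β : Fin m → F) := by
  rw [synd, Finset.sum_eq_single β]
  · simp
  · intro b _ hb; simp [Pi.single_apply, hb]
  · intro h; exact absurd (Finset.mem_univ β) h

-- uniqueness of the witness index
lemma IsProj.ne_zero {α : Fin m → F} (h : IsProj α) : α ≠ 0 := by
  obtain ⟨i, h1, -⟩ := h
  intro h0; rw [h0] at h1; simp at h1

lemma proj_eq (β γ : PA F m) (t : F) (h : (β : Fin m → F) = t • (γ : Fin m → F)) :
    β = γ ∧ t = 1 := by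
  obtain ⟨i, hi1, hi0⟩ := β.2
  obtain ⟨k, hk1, hk0⟩ := γ.2
  have ht : t ≠ 0 := by
    intro h0; rw [h0, zero_smul] at h; exact β.2.ne_zero h
  have happ : ∀ j, (β : Fin m → F) j = t * (γ : Fin m → F) j := fun j => by
    rw [h]; rfl
  have hik : i = k := by
    rcases lt_trichotomy i k with hlt | he | hgt
    · have := happ i; rw [hk0 i hlt, hi1, mul_zero] at this; exact absurd this one_ne_zero
    · exact he
    · have := happ k; rw [hi0 k hgt, hk1, mul_one] at this; exact absurd this.symm ht
  have ht1 : t = 1 := by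
    have := happ i; rw [hi1, hik, hk1, mul_one] at this; exact this.symm
  subst ht1
  rw [one_smul] at h
  exact ⟨Subtype.ext h, rfl⟩

lemma two_singles {β γ : PA F m} {t u : F}
    (h : t • (β : Fin m → F) + u • (γ : Fin m → F) = 0) :
    (Pi.single β t : PA F m → F) + Pi.single γ u = 0 := by
  by_cases ht : t = 0
  · subst ht
    rw [zero_smul, zero_add] at h
    have hu : u = 0 := by
      by_contra hu
      exact γ.2.ne_zero (by simpa [hu] using (smul_eq_zero.1 h).resolve_left hu)
    subst hu
    ext a; simp
  · have hβ : (β : Fin m → F) = (-u / t) • (γ : Fin m → F) := by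
      have h2 : t • (β : Fin m → F) = (-u) • (γ : Fin m → F) := by
        rw [neg_smul, eq_neg_iff_add_eq_zero]; exact h
      have := congrArg (fun v => t⁻¹ • v) h2
      simpa [smul_smul, inv_mul_cancel₀ ht, div_eq_inv_mul, mul_comm] using this
    obtain ⟨hbc, h1⟩ := proj_eq β γ _ hβ
    have hu : u = -t := by
      field_simp at h1
      linear_combination -h1
    subst hu hbc
    ext a
    by_cases ha : a = β <;> simp [Pi.single_apply, ha]

-- normalization
lemma exists_norm {v : Fin m → F} (hv : v ≠ 0) :
    ∃ (β : PA F m) (t : F), t ≠ 0 ∧ v = t • (β : Fin m → F) := by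
  have hs : (Finset.univ.filter (fun i => v i ≠ 0)).Nonempty := by
    rw [Finset.filter_nonempty_iff]
    obtain ⟨i, hi⟩ := Function.ne_iff.1 hv
    exact ⟨i, Finset.mem_univ i, hi⟩
  set i := (Finset.univ.filter (fun i => v i ≠ 0)).min' hs with hidef
  have hi : v i ≠ 0 := by
    have := Finset.min'_mem _ hs
    rw [Finset.mem_filter] at this; exact this.2
  refine ⟨⟨(v i)⁻¹ • v, i, by simp [inv_mul_cancel₀ hi], fun j hj => ?_⟩, v i, hi, by
    simp [smul_smul, mul_inv_cancel₀ hi]⟩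
  have hj0 : v j = 0 := by
    by_contra hj0
    have hjmem : j ∈ Finset.univ.filter (fun i => v i ≠ 0) := by simp [hj0]
    exact absurd (Finset.min'_le _ j hjmem) (not_le.2 hj)
  simp [hj0]

set_option linter.unusedSectionVars false

lemma hammingNorm_single_le {ι : Type*} [Fintype ι] [DecidableEq ι] (β : ι) (t : F) :
    hammingNorm (Pi.single β t : ι → F) ≤ 1 := by
  rw [hammingNorm]
  refine le_trans (Finset.card_le_card (fun a ha => ?_)) (le_of_eq (Finset.card_singleton β))
  simp only [Finset.mem_filter, ne_eq, Pi.single_apply] at ha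
  rcases ha with ⟨-, ha⟩
  by_contra hab
  simp only [Finset.mem_singleton] at hab
  exact ha (if_neg hab)

lemma hdecomp [Nonempty (PA F m)] (z : PA F m → F) :
    ∃ c, c ∈ Hcode F m ∧ ∃ (β : PA F m) (t : F), z = c + Pi.single β t := by
  by_cases h : synd z = 0
  · exact ⟨z, h, Classical.arbitrary _, 0, by simp⟩
  · obtain ⟨β, t, ht, hv⟩ := exists_norm h
    refine ⟨z - Pi.single β t, ?_, β, t, (sub_add_cancel _ _).symm⟩
    rw [mem_Hcode, synd_sub, synd_single, ← hv, sub_self]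

lemma hcode_unique {c₁ c₂ : PA F m → F} (h₁ : c₁ ∈ Hcode F m) (h₂ : c₂ ∈ Hcode F m)
    {β₁ β₂ : PA F m} {t₁ t₂ : F}
    (h : c₁ + Pi.single β₁ t₁ = c₂ + Pi.single β₂ t₂) : c₁ = c₂ := by
  rw [mem_Hcode] at h₁ h₂
  have hsy := congrArg synd h
  rw [synd_add, synd_add, h₁, h₂, zero_add, zero_add, synd_single, synd_single] at hsy
  have hs : t₁ • (β₁ : Fin m → F) + (-t₂) • (β₂ : Fin m → F) = 0 := by
    rw [neg_smul, ← sub_eq_add_neg, sub_eq_zero]; exact hsy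
  have h2 := two_singles hs
  have hss : (Pi.single β₁ t₁ : PA F m → F) = Pi.single β₂ t₂ := by
    have hn : (Pi.single β₁ t₁ : PA F m → F) = - Pi.single β₂ (-t₂) := by
      rw [eq_neg_iff_add_eq_zero]; exact h2
    rw [hn]; ext a; simp [Pi.single_apply]; split <;> simp
  rw [hss] at h
  exact add_right_cancel h

lemma hdist_le_one_iff {ι : Type*} [Fintype ι] [DecidableEq ι] [Nonempty ι] (z c : ι → F) :
    hammingDist z c ≤ 1 ↔ ∃ (β : ι) (t : F), z = c + Pi.single β t := by
  constructor
  · intro h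
    by_cases he : z = c
    · exact ⟨Classical.arbitrary _, 0, by simp [he]⟩
    · obtain ⟨i, hi⟩ := Function.ne_iff.1 he
      refine ⟨i, z i - c i, funext fun a => ?_⟩
      by_cases ha : a = i
      · subst ha; simp
      · simp only [Pi.add_apply, Pi.single_apply, if_neg ha, add_zero]
        by_contra hne
        have h2 : 2 ≤ hammingDist z c := by
          rw [hammingDist]
          have hsub : ({a, i} : Finset ι) ⊆ Finset.univ.filter (fun j => z j ≠ c j) := by
            intro b hb
            simp only [Finset.mem_insert, Finset.mem_singleton] at hb
            rcases hb with rfl | rfl <;> simp [hi]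
            exact fun hc => hne (by rw [hc])
          calc 2 = ({a, i} : Finset ι).card := by
                rw [Finset.card_insert_of_notMem (by simp [ha]), Finset.card_singleton]
          _ ≤ _ := Finset.card_le_card hsub
        omega
  · rintro ⟨β, t, rfl⟩
    rw [hammingDist_comm, hammingDist_eq_hammingNorm, neg_add_cancel_left]
    exact hammingNorm_single_le β t

-- ===== bar and singleProj lemmas =====

instance : Nonempty (PA F (m+1)) := ⟨singleProj 0⟩

lemma singleProj_coe (i : Fin m) : ((singleProj i : PA F m) : Fin m → F) = Pi.single i 1 := rfl

lemma bar_eq_sum (α : Fin m → F) :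
    bar α = ∑ i, (Pi.single (singleProj i) (α i) : PA F m → F) := by
  funext β
  rw [bar, Finset.sum_apply]
  refine Finset.sum_congr rfl fun i _ => ?_
  rw [Pi.single_apply]
  congr 1
  simp [Subtype.ext_iff, singleProj_coe, eq_comm]

lemma synd_bar (α : Fin m → F) : synd (bar α) = α := by
  rw [bar_eq_sum, synd_sum]
  simp only [synd_single, singleProj_coe]
  funext j
  rw [Finset.sum_apply, Finset.sum_eq_single j]
  · simp
  · intro b _ hb; simp [Pi.single_apply, Ne.symm hb]
  · intro h; exact absurd (Finset.mem_univ j) h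

-- ===== linear functionals =====

def fl (φ : PA F m → F) : (PA F m → F) →ₗ[F] F where
  toFun := fun c => ∑ α, c α * φ α
  map_add' := by intro c d; simp [add_mul, Finset.sum_add_distrib]
  map_smul' := by intro t c; simp [Finset.mul_sum, mul_assoc]

lemma fl_single (φ : PA F m → F) (β : PA F m) (t : F) :
    fl φ (Pi.single β t) = t * φ β := by
  show (∑ α, (Pi.single β t : PA F m → F) α * φ α) = t * φ β
  rw [Finset.sum_eq_single β]
  · simp
  · intro b _ hb; simp [Pi.single_apply, hb]
  · intro h; exact absurd (Finset.mem_univ β) h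

lemma fl_bar (φ : PA F m → F) (α : Fin m → F) :
    fl φ (bar α) = ∑ i, α i * φ (singleProj i) := by
  rw [bar_eq_sum, map_sum]
  exact Finset.sum_congr rfl fun i _ => fl_single φ _ _

-- ===== Rcomp basic facts =====

lemma Rcomp_le_ker (δ : PA F m) : Rcomp δ ≤ LinearMap.ker syndL := by
  rw [Rcomp, Submodule.span_le]
  rintro c ⟨hc, -, -⟩
  exact hc

lemma Rcomp_synd {δ : PA F m} {r : PA F m → F} (hr : r ∈ Rcomp δ) : synd r = 0 :=
  Rcomp_le_ker δ hr

lemma Rcomp_le_ker_fl (δ : PA F m) (φ : PA F m → F)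
    (hφ : ∀ c ∈ Hcode F m, hammingNorm c = 3 → c δ = 1 → fl φ c = 0) :
    Rcomp δ ≤ LinearMap.ker (fl φ) := by
  rw [Rcomp, Submodule.span_le]
  rintro c ⟨h1, h2, h3⟩
  exact hφ c h1 h2 h3

lemma fl_vanish {δ : PA F m} {φ : PA F m → F}
    (hφ : ∀ c ∈ Hcode F m, hammingNorm c = 3 → c δ = 1 → fl φ c = 0)
    {r : PA F m → F} (hr : r ∈ Rcomp δ) : fl φ r = 0 :=
  Rcomp_le_ker_fl δ φ hφ hr

-- ===== weight-3 words =====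

lemma norm_three {δ β γ : PA F m} {t u : F} (hβδ : β ≠ δ) (hγδ : γ ≠ δ) (hγβ : γ ≠ β)
    (ht : t ≠ 0) (hu : u ≠ 0) :
    hammingNorm ((Pi.single δ 1 + Pi.single β t + Pi.single γ u : PA F m → F)) = 3 := by
  rw [hammingNorm]
  have hset : Finset.univ.filter
      (fun a => (Pi.single δ 1 + Pi.single β t + Pi.single γ u : PA F m → F) a ≠ 0)
      = {δ, β, γ} := by
    ext a
    simp only [Finset.mem_filter, Finset.mem_univ, true_and, Finset.mem_insert,
      Finset.mem_singleton, Pi.add_apply, Pi.single_apply]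
    constructor
    · intro ha
      by_contra hc
      push_neg at hc
      obtain ⟨h1, h2, h3⟩ := hc
      simp [h1, h2, h3] at ha
    · rintro (rfl | rfl | rfl)
      · simp [Ne.symm hβδ, Ne.symm hγδ]
      · simp [hβδ, Ne.symm hγβ, ht]
      · simp [hγδ, hγβ, hu]
  rw [hset]
  rw [Finset.card_insert_of_notMem (by simp [hβδ, hγδ, Ne.symm hγβ]; tauto),
    Finset.card_insert_of_notMem (by simp [hγβ]; intro h; exact absurd h.symm hγβ),
    Finset.card_singleton]

lemma gen_mem (δ β γ : PA F m) (t u : F) (hβδ : β ≠ δ) (hγδ : γ ≠ δ) (hγβ : γ ≠ β)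
    (ht : t ≠ 0) (hu : u ≠ 0)
    (hsynd : (δ : Fin m → F) + t • (β : Fin m → F) + u • (γ : Fin m → F) = 0) :
    (Pi.single δ 1 + Pi.single β t + Pi.single γ u : PA F m → F) ∈ Rcomp δ := by
  apply Submodule.subset_span
  refine ⟨?_, norm_three hβδ hγδ hγβ ht hu, ?_⟩
  · rw [mem_Hcode, synd_add, synd_add, synd_single, synd_single, synd_single, one_smul]
    exact hsynd
  · simp [Pi.single_apply, Ne.symm hβδ, Ne.symm hγδ]

/-- Given `β ≠ δ` and `a ≠ 0`, produce the third point of the line and the generator. -/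
lemma gen_of {δ β : PA F m} (hne : β ≠ δ) {a : F} (ha : a ≠ 0) :
    ∃ (γ : PA F m) (u : F),
      (Pi.single δ 1 + Pi.single β a + Pi.single γ u : PA F m → F) ∈ Rcomp δ := by
  have hnz : (δ : Fin m → F) + a • (β : Fin m → F) ≠ 0 := by
    intro h0
    have : (δ : Fin m → F) = (-a) • (β : Fin m → F) := by
      rw [neg_smul, eq_neg_iff_add_eq_zero]; exact h0
    exact hne ((proj_eq δ β _ this).1).symm
  obtain ⟨γ, w, hw, hv⟩ := exists_norm hnz
  refine ⟨γ, -w, gen_mem δ β γ a (-w) hne ?_ ?_ ha (neg_ne_zero.2 hw) ?_⟩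
  · -- γ ≠ δ
    intro h; subst h
    have : (1 - w) • (γ : Fin m → F) + a • (β : Fin m → F) = 0 := by
      rw [sub_smul, one_smul]
      linear_combination (norm := module) hv
    by_cases h1 : (1 : F) - w = 0
    · rw [h1, zero_smul, zero_add] at this
      exact β.2.ne_zero ((smul_eq_zero.1 this).resolve_left ha)
    · have : (γ : Fin m → F) = (-(a / (1 - w))) • (β : Fin m → F) := by
        rw [neg_smul, eq_neg_iff_add_eq_zero]
        have := congrArg (fun v => (1 - w)⁻¹ • v) this
        simpa [smul_add, smul_smul, inv_mul_cancel₀ h1, div_eq_inv_mul, mul_comm] using this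
      exact hne ((proj_eq γ β _ this).1 ▸ rfl)
  · -- γ ≠ β
    intro h; subst h
    have : (δ : Fin m → F) = (w - a) • (γ : Fin m → F) := by
      rw [sub_smul]
      linear_combination (norm := module) hv
    exact hne ((proj_eq δ γ _ this).1).symm
  · rw [hv]
    module

-- ===== switching lemmas =====

set_option maxHeartbeats 1000000 in
lemma swA {δ : PA F m} {r : PA F m → F} (hr : r ∈ Rcomp δ) (β : PA F m) (t : F) :
    ∃ r' ∈ Rcomp δ, ∃ (β' : PA F m) (t' : F),
      r + Pi.single β t = (r' + Pi.single δ 1) + Pi.single β' t' := by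
  by_cases hβ : β = δ
  · subst hβ
    refine ⟨r, hr, β, t - 1, ?_⟩
    ext a; simp [Pi.single_apply]; split <;> ring
  · by_cases ht : t = 0
    · subst ht
      refine ⟨r, hr, δ, -1, ?_⟩
      ext a; simp [Pi.single_apply]; split <;> ring
    · obtain ⟨γ, u, hg⟩ := gen_of hβ (neg_ne_zero.2 ht)
      refine ⟨r - (Pi.single δ 1 + Pi.single β (-t) + Pi.single γ u), sub_mem hr hg, γ, u, ?_⟩
      rw [Pi.single_neg]
      abel

set_option maxHeartbeats 1000000 in
lemma swB {δ : PA F m} {r : PA F m → F} (hr : r ∈ Rcomp δ) (β : PA F m) (t : F) :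
    ∃ r' ∈ Rcomp δ, ∃ (β' : PA F m) (t' : F),
      (r + Pi.single δ 1) + Pi.single β t = r' + Pi.single β' t' := by
  by_cases hβ : β = δ
  · subst hβ
    refine ⟨r, hr, β, 1 + t, ?_⟩
    ext a; simp [Pi.single_apply]; split <;> ring
  · by_cases ht : t = 0
    · subst ht
      exact ⟨r, hr, δ, 1, by simp⟩
    · obtain ⟨γ, u, hg⟩ := gen_of hβ ht
      refine ⟨r + (Pi.single δ 1 + Pi.single β t + Pi.single γ u), add_mem hr hg, γ, -u, ?_⟩
      rw [Pi.single_neg]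
      abel

-- ===== the geometric functional G =====

section Gsec
variable {s : ℕ}

noncomputable def Gfun (w : Fin s → F) (j k : Fin s) (v : Fin s → F) : F :=
  v k / w k + (if ∀ i, i ≠ j → (v - (v k / w k) • w) i = 0 then (v - (v k / w k) • w) j else 0)

variable {w : Fin s → F} {j k : Fin s}

lemma G_zero : Gfun w j k 0 = 0 := by
  simp [Gfun]

lemma G_smul (t : F) (v : Fin s → F) : Gfun w j k (t • v) = t * Gfun w j k v := by
  by_cases ht : t = 0
  · subst ht; simp [G_zero]
  · have hP : (t • v : Fin s → F) - ((t • v) k / w k) • w = t • (v - (v k / w k) • w) := by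
      have : (t • v : Fin s → F) k = t * v k := rfl
      rw [this, smul_sub, smul_smul, mul_div_assoc]
    rw [Gfun, Gfun, hP]
    have hc : (∀ i, i ≠ j → (t • (v - (v k / w k) • w) : Fin s → F) i = 0)
        ↔ (∀ i, i ≠ j → (v - (v k / w k) • w) i = 0) := by
      constructor <;> intro h i hi
      · have := h i hi
        simpa [Pi.smul_apply, smul_eq_mul, ht] using this
      · simp [Pi.smul_apply, h i hi]
    rw [if_congr hc rfl rfl]
    have happ : (t • v : Fin s → F) k = t * v k := rfl
    split
    · simp only [Pi.smul_apply, smul_eq_mul, happ]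
      ring
    · simp only [happ]; ring

lemma G_neg (v : Fin s → F) : Gfun w j k (-v) = - Gfun w j k v := by
  have := G_smul (w := w) (j := j) (k := k) (-1) v
  simpa using this

lemma G_addw (hk : w k ≠ 0) (v : Fin s → F) : Gfun w j k (w + v) = 1 + Gfun w j k v := by
  have hP : (w + v : Fin s → F) - ((w + v) k / w k) • w = v - (v k / w k) • w := by
    have : (w + v : Fin s → F) k = w k + v k := rfl
    rw [this, add_div, div_self hk, add_smul, one_smul]
    abel
  rw [Gfun, Gfun, hP]
  have : (w + v : Fin s → F) k = w k + v k := rfl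
  rw [this, add_div, div_self hk]
  ring

lemma G_w (hk : w k ≠ 0) : Gfun w j k w = 1 := by
  have := G_addw (j := j) hk 0
  simpa [G_zero] using this

lemma G_addw' (hk : w k ≠ 0) (t : F) (v : Fin s → F) :
    Gfun w j k (w + t • v) = 1 + t * Gfun w j k v := by
  rw [G_addw hk, G_smul]

lemma G_single_j (hjk : j ≠ k) : Gfun w j k (Pi.single j 1) = 1 := by
  have h0 : (Pi.single j 1 : Fin s → F) k = 0 := Pi.single_eq_of_ne (Ne.symm hjk) 1
  rw [Gfun, h0, zero_div, zero_smul, sub_zero, zero_add]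
  rw [if_pos]
  · simp
  · intro i hi; exact Pi.single_eq_of_ne hi 1

lemma G_single_k {l : Fin s} (hk : w k ≠ 0) (hlj : l ≠ j) (hlk : l ≠ k) (hl : w l ≠ 0) :
    Gfun w j k (Pi.single k 1) = (w k)⁻¹ := by
  have h1 : (Pi.single k 1 : Fin s → F) k = 1 := Pi.single_eq_same k 1
  rw [Gfun, h1, one_div]
  rw [if_neg, add_zero]
  intro hcond
  have := hcond l hlj
  rw [Pi.sub_apply, Pi.single_eq_of_ne hlk, Pi.smul_apply, smul_eq_mul, zero_sub, neg_eq_zero,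
    mul_eq_zero] at this
  rcases this with h | h
  · exact inv_ne_zero hk h
  · exact hl h

lemma G_single_other {i : Fin s} (hij : i ≠ j) (hik : i ≠ k) :
    Gfun w j k (Pi.single i 1) = 0 := by
  have h0 : (Pi.single i 1 : Fin s → F) k = 0 := Pi.single_eq_of_ne (Ne.symm hik) 1
  rw [Gfun, h0, zero_div, zero_smul, sub_zero, zero_add]
  rw [if_neg]
  intro hcond
  have := hcond i hij
  rw [Pi.single_eq_same] at this
  exact one_ne_zero this

end Gsec

-- ===== structure of weight-3 codewords =====

set_option maxHeartbeats 2000000 in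
lemma gen_structure {δ : PA F m} {c : PA F m → F} (h1 : c ∈ Hcode F m)
    (h2 : hammingNorm c = 3) (h3 : c δ = 1) :
    ∃ (β γ : PA F m) (t u : F), β ≠ δ ∧ γ ≠ δ ∧ γ ≠ β ∧
      c = Pi.single δ 1 + Pi.single β t + Pi.single γ u ∧
      (δ : Fin m → F) + t • (β : Fin m → F) + u • (γ : Fin m → F) = 0 := by
  classical
  set S := Finset.univ.filter (fun a => c a ≠ 0) with hS
  have hcard : S.card = 3 := h2
  have hδS : δ ∈ S := by simp [hS, h3]
  obtain ⟨a, b, d, hab, had, hbd, habd⟩ := Finset.card_eq_three.1 hcard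
  have hex : ∃ (β γ : PA F m), β ≠ δ ∧ γ ≠ δ ∧ γ ≠ β ∧ S = {δ, β, γ} := by
    rw [habd] at hδS
    simp only [Finset.mem_insert, Finset.mem_singleton] at hδS
    rcases hδS with rfl | rfl | rfl
    · exact ⟨b, d, Ne.symm hab, Ne.symm had, Ne.symm hbd, habd⟩
    · refine ⟨a, d, hab, Ne.symm hbd, fun h => had h.symm, by
        rw [habd]; ext e
        simp only [Finset.mem_insert, Finset.mem_singleton]; tauto⟩
    · refine ⟨a, b, had, hbd, fun h => hab h.symm, by
        rw [habd]; ext e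
        simp only [Finset.mem_insert, Finset.mem_singleton]; tauto⟩
  obtain ⟨β, γ, hβδ, hγδ, hγβ, hSeq⟩ := hex
  have hmemS : ∀ e, e ∈ S ↔ c e ≠ 0 := fun e => by simp [hS]
  have hceq : c = Pi.single δ 1 + Pi.single β (c β) + Pi.single γ (c γ) := by
    funext e
    by_cases heS : e ∈ S
    · rw [hSeq] at heS
      simp only [Finset.mem_insert, Finset.mem_singleton] at heS
      rcases heS with rfl | rfl | rfl
      · simp [Pi.single_apply, Ne.symm hβδ, Ne.symm hγδ, h3]
      · simp [Pi.single_apply, hβδ, Ne.symm hγβ]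
      · simp [Pi.single_apply, hγδ, hγβ]
    · have hce : c e = 0 := by
        by_contra hc; exact heS ((hmemS e).2 hc)
      have heδ : e ≠ δ := by rintro rfl; rw [hSeq] at heS; simp at heS
      have heβ : e ≠ β := by rintro rfl; rw [hSeq] at heS; simp at heS
      have heγ : e ≠ γ := by rintro rfl; rw [hSeq] at heS; simp at heS
      simp [Pi.single_apply, hce, heδ, heβ, heγ]
  refine ⟨β, γ, c β, c γ, hβδ, hγδ, hγβ, hceq, ?_⟩
  have := h1
  rw [mem_Hcode] at this
  rw [hceq, synd_add, synd_add, synd_single, synd_single, synd_single, one_smul] at this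
  exact this

-- first coordinate of a projective point is 0 or 1
lemma proj_fst (α : PA F (m+1)) : (α : Fin (m+1) → F) 0 = 0 ∨ (α : Fin (m+1) → F) 0 = 1 := by
  obtain ⟨i, hi1, hi0⟩ := α.2
  by_cases h : i = 0
  · subst h; right; exact hi1
  · left; exact hi0 0 (Fin.pos_of_ne_zero h)

lemma tail_single_zero : Fin.tail (Pi.single (0 : Fin (m+1)) (1:F) : Fin (m+1) → F) = (0 : Fin m → F) := by
  funext i
  rw [Fin.tail]
  simp [Pi.single_apply, Fin.succ_ne_zero]

lemma tail_single_succ (i : Fin m) :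
    Fin.tail (Pi.single (Fin.succ i) (1:F) : Fin (m+1) → F) = (Pi.single i 1 : Fin m → F) := by
  funext a
  rw [Fin.tail]
  simp only [Pi.single_apply]
  rw [if_congr (Fin.succ_inj (a := a) (b := i)) rfl rfl]

-- tail of syndrome equation
lemma tail_eq {v₁ v₂ v₃ : Fin (m+1) → F} {t u : F}
    (h : v₁ + t • v₂ + u • v₃ = 0) :
    Fin.tail v₁ + t • Fin.tail v₂ + u • Fin.tail v₃ = 0 := by
  funext i
  have := congrFun h (Fin.succ i)
  exact this

lemma fst_eq {v₁ v₂ v₃ : Fin (m+1) → F} {t u : F}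
    (h : v₁ + t • v₂ + u • v₃ = 0) :
    v₁ 0 + t * v₂ 0 + u * v₃ 0 = 0 := congrFun h 0

-- ===== the functional separating two far components =====

noncomputable def phiF {s : ℕ} (x w : Fin s → F) (j k : Fin s) : PA F (s+1) → F := fun α =>
  if (α : Fin (s+1) → F) 0 = 0 then Gfun w j k (Fin.tail (α : Fin (s+1) → F))
  else Gfun w j k (Fin.tail (α : Fin (s+1) → F) - x)

lemma phiF_inf {s : ℕ} {x w : Fin s → F} {j k : Fin s} {α : PA F (s+1)}
    (h : (α : Fin (s+1) → F) 0 = 0) :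
    phiF x w j k α = Gfun w j k (Fin.tail (α : Fin (s+1) → F)) := if_pos h

lemma phiF_aff {s : ℕ} {x w : Fin s → F} {j k : Fin s} {α : PA F (s+1)}
    (h : (α : Fin (s+1) → F) 0 = 1) :
    phiF x w j k α = Gfun w j k (Fin.tail (α : Fin (s+1) → F) - x) :=
  if_neg (by rw [h]; exact one_ne_zero)

lemma consProj_coe {s : ℕ} (z : Fin s → F) :
    ((consProj z : PA F (s+1)) : Fin (s+1) → F) = Fin.cons 1 z := rfl

lemma phiF_cons {s : ℕ} (x w : Fin s → F) (j k : Fin s) (z : Fin s → F) :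
    phiF x w j k (consProj z) = Gfun w j k (z - x) := by
  rw [phiF_aff (by rw [consProj_coe]; simp), consProj_coe, Fin.tail_cons]

set_option maxHeartbeats 2000000 in
lemma phiF_ann {s : ℕ} (x w : Fin s → F) (j k : Fin s) (z : Fin s → F)
    (hadd : ∀ v, Gfun w j k ((z - x) + v) = Gfun w j k (z - x) + Gfun w j k v) :
    ∀ c ∈ Hcode F (s+1), hammingNorm c = 3 → c (consProj z) = 1 →
      fl (phiF x w j k) c = 0 := by
  intro c h1 h2 h3
  obtain ⟨β, γ, t, u, hβδ, hγδ, hγβ, hceq, hsynd⟩ := gen_structure h1 h2 h3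
  rw [hceq, map_add, map_add, fl_single, fl_single, fl_single, one_mul]
  have h0 := fst_eq hsynd
  have htl := tail_eq hsynd
  rw [consProj_coe, Fin.cons_zero] at h0
  rw [consProj_coe, Fin.tail_cons] at htl
  rw [phiF_cons]
  rcases proj_fst β with hβ0 | hβ0 <;> rcases proj_fst γ with hγ0 | hγ0
  · -- both infinite: contradiction
    rw [hβ0, hγ0, mul_zero, mul_zero, add_zero, add_zero] at h0
    exact absurd h0 one_ne_zero
  · -- β infinite, γ affine : u = -1
    rw [phiF_inf hβ0, phiF_aff hγ0]
    have hu : u = -1 := by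
      rw [hβ0, hγ0] at h0
      linear_combination h0
    have hvec : Fin.tail (γ : Fin (s+1) → F) - x
        = (z - x) + t • Fin.tail (β : Fin (s+1) → F) := by
      subst hu
      linear_combination (norm := module) -htl
    rw [hvec, hadd, G_smul, hu]
    ring
  · -- β affine, γ infinite : t = -1
    rw [phiF_aff hβ0, phiF_inf hγ0]
    have ht : t = -1 := by
      rw [hβ0, hγ0] at h0
      linear_combination h0
    have hvec : Fin.tail (β : Fin (s+1) → F) - x
        = (z - x) + u • Fin.tail (γ : Fin (s+1) → F) := by
      subst ht
      linear_combination (norm := module) -htl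
    rw [hvec, hadd, G_smul, ht]
    ring
  · -- both affine : u = -1 - t
    rw [phiF_aff hβ0, phiF_aff hγ0]
    have hu : u = -1 - t := by
      rw [hβ0, hγ0] at h0
      linear_combination h0
    have hvec : u • (Fin.tail (γ : Fin (s+1) → F) - x)
        = -((z - x) + t • (Fin.tail (β : Fin (s+1) → F) - x)) := by
      subst hu
      linear_combination (norm := module) htl
    have hval : u * Gfun w j k (Fin.tail (γ : Fin (s+1) → F) - x)
        = -(Gfun w j k (z - x) + t * Gfun w j k (Fin.tail (β : Fin (s+1) → F) - x)) := by
      rw [← G_smul, hvec, G_neg, hadd, G_smul]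
    rw [hval]
    ring

set_option maxHeartbeats 2000000 in
lemma exists_phi {s : ℕ} {x y : Fin s → F} (h3 : 3 ≤ hammingDist x y) :
    ∃ φ : PA F (s+1) → F,
      (∀ c ∈ Hcode F (s+1), hammingNorm c = 3 → c (consProj x) = 1 → fl φ c = 0) ∧
      (∀ c ∈ Hcode F (s+1), hammingNorm c = 3 → c (consProj y) = 1 → fl φ c = 0) ∧
      fl φ (bar (Fin.cons 1 x) - bar (Fin.cons 1 y)
        - Pi.single (consProj x) 1 + Pi.single (consProj y) 1) ≠ 0 := by
  have hcard : 3 ≤ (Finset.univ.filter (fun i => x i ≠ y i)).card := h3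
  set S := Finset.univ.filter (fun i => x i ≠ y i) with hS
  obtain ⟨j, hjS⟩ := Finset.card_pos.1 (show 0 < S.card by omega)
  obtain ⟨k, hkS⟩ := Finset.card_pos.1 (show 0 < (S.erase j).card by
    rw [Finset.card_erase_of_mem hjS]; omega)
  obtain ⟨l, hlS⟩ := Finset.card_pos.1 (show 0 < ((S.erase j).erase k).card by
    rw [Finset.card_erase_of_mem hkS, Finset.card_erase_of_mem hjS]; omega)
  have hkj : k ≠ j := (Finset.mem_erase.1 hkS).1
  have hlk : l ≠ k := (Finset.mem_erase.1 hlS).1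
  have hlj : l ≠ j := (Finset.mem_erase.1 (Finset.mem_erase.1 hlS).2).1
  have hwof : ∀ i, i ∈ S → (y - x) i ≠ 0 := by
    intro i hi
    rw [hS, Finset.mem_filter] at hi
    exact sub_ne_zero.2 (Ne.symm hi.2)
  have hwj : (y - x) j ≠ 0 := hwof j hjS
  have hwk : (y - x) k ≠ 0 := hwof k (Finset.mem_erase.1 hkS).2
  have hwl : (y - x) l ≠ 0 := hwof l (Finset.mem_erase.1 (Finset.mem_erase.1 hlS).2).2
  refine ⟨phiF x (y - x) j k, ?_, ?_, ?_⟩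
  · apply phiF_ann
    intro v
    rw [sub_self x, zero_add, G_zero, zero_add]
  · apply phiF_ann
    intro v
    rw [show (y : Fin s → F) - x + v = (y - x) + v from rfl, G_addw hwk, G_w hwk]
  · rw [map_add, map_sub, map_sub, fl_single, fl_single, one_mul, one_mul,
      phiF_cons, phiF_cons, fl_bar, fl_bar]
    have hsp0 : phiF x (y - x) j k (singleProj 0) = - Gfun (y - x) j k x := by
      rw [phiF_aff (by rw [singleProj_coe]; exact Pi.single_eq_same 0 1), singleProj_coe,
        tail_single_zero, zero_sub, G_neg]
    have hspsucc : ∀ i : Fin s, phiF x (y - x) j k (singleProj (Fin.succ i))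
        = Gfun (y - x) j k (Pi.single i 1) := by
      intro i
      rw [phiF_inf (by
        rw [singleProj_coe]; exact Pi.single_eq_of_ne (Ne.symm (Fin.succ_ne_zero i)) 1),
        singleProj_coe, tail_single_succ]
    rw [Fin.sum_univ_succ, Fin.sum_univ_succ]
    simp only [Fin.cons_zero, Fin.cons_succ, hsp0, hspsucc]
    have hsum : ∀ z' : Fin s → F, (∑ i, z' i * Gfun (y - x) j k (Pi.single i 1))
        = z' j * 1 + z' k * ((y - x) k)⁻¹ := by
      intro z'
      have hterm : ∀ i : Fin s, z' i * Gfun (y - x) j k (Pi.single i 1)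
          = (if i = j then z' j * 1 else 0) + (if i = k then z' k * ((y - x) k)⁻¹ else 0) := by
        intro i
        by_cases hij : i = j
        · subst hij
          rw [if_pos rfl, if_neg (fun h => hkj h.symm), G_single_j (fun h => hkj h.symm)]
          ring
        · by_cases hik : i = k
          · subst hik
            rw [if_neg hij, if_pos rfl, G_single_k hwk hlj hlk hwl]
            ring
          · rw [if_neg hij, if_neg hik, G_single_other hij hik]
            ring
      rw [Finset.sum_congr rfl (fun i _ => hterm i), Finset.sum_add_distrib,
        Finset.sum_ite_eq' Finset.univ j, Finset.sum_ite_eq' Finset.univ k]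
      simp
    rw [hsum x, hsum y, sub_self x, G_zero, G_w hwk]
    intro hcontra
    apply hwj
    rw [Pi.sub_apply]
    have hkk : (y - x) k = y k - x k := Pi.sub_apply y x k
    rw [hkk] at hcontra hwk
    have hinv : (y k - x k) * (y k - x k)⁻¹ = 1 := mul_inv_cancel₀ hwk
    linear_combination -hcontra - hinv

-- ===== 1-codes have minimum distance 3 =====

lemma dist3 {ι : Type*} [Fintype ι] [DecidableEq ι] {C : Set (ι → F)} (hC : IsOneCode C)
    {x y : ι → F} (hx : x ∈ C) (hy : y ∈ C) (hxy : x ≠ y) : 3 ≤ hammingDist x y := by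
  by_contra hlt
  push_neg at hlt
  set S := Finset.univ.filter (fun i => x i ≠ y i) with hS
  have hcard : S.card ≤ 2 := by
    have : hammingDist x y = S.card := rfl
    omega
  obtain ⟨i, hiS⟩ : S.Nonempty := by
    rw [Finset.filter_nonempty_iff]
    obtain ⟨i, hi⟩ := Function.ne_iff.1 hxy
    exact ⟨i, Finset.mem_univ i, hi⟩
  set z := Function.update x i (y i) with hz
  have h1 : hammingDist x z ≤ 1 := by
    rw [hammingDist]
    refine le_trans (Finset.card_le_card (fun a ha => ?_)) (le_of_eq (Finset.card_singleton i))
    rw [Finset.mem_filter] at ha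
    rw [Finset.mem_singleton]
    by_contra hai
    exact ha.2 (by rw [hz, Function.update_of_ne hai])
  have h2 : hammingDist y z ≤ 1 := by
    rw [hammingDist]
    have hsub : Finset.univ.filter (fun a => y a ≠ z a) ⊆ S.erase i := by
      intro a ha
      rw [Finset.mem_filter] at ha
      rw [Finset.mem_erase]
      constructor
      · rintro rfl
        exact ha.2 (by rw [hz, Function.update_self])
      · rw [hS, Finset.mem_filter]
        refine ⟨Finset.mem_univ a, fun hxa => ha.2 ?_⟩
        by_cases hai : a = i
        · subst hai; rw [hz, Function.update_self]
        · rw [hz, Function.update_of_ne hai]; exact hxa.symm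
    calc (Finset.univ.filter (fun a => y a ≠ z a)).card ≤ (S.erase i).card :=
          Finset.card_le_card hsub
    _ = S.card - 1 := Finset.card_erase_of_mem hiS
    _ ≤ 1 := by omega
  exact hC x hx y hy hxy z ⟨h1, h2⟩

-- ===== membership in Hcode for component translates =====

lemma b_mem {s : ℕ} (y : Fin s → F) :
    (bar (Fin.cons 1 y) - Pi.single (consProj y) 1 : PA F (s+1) → F) ∈ Hcode F (s+1) := by
  rw [mem_Hcode, synd_sub, synd_bar, synd_single, one_smul, consProj_coe, sub_self]

lemma Kc_mem {s : ℕ} {y : Fin s → F} {r : PA F (s+1) → F} (hr : r ∈ Rcomp (consProj y)) :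
    r + (bar (Fin.cons 1 y) - Pi.single (consProj y) 1) ∈ Hcode F (s+1) := by
  rw [mem_Hcode, synd_add, Rcomp_synd hr, zero_add]
  exact b_mem y

-- z near the switched component implies its Hamming codeword is in the unswitched one
lemma near_T {s : ℕ} {y : Fin s → F} {r z : PA F (s+1) → F} (hr : r ∈ Rcomp (consProj y))
    (β : PA F (s+1)) (t : F) (hz : z = (r + bar (Fin.cons 1 y)) + Pi.single β t) :
    ∃ r'' ∈ Rcomp (consProj y), ∃ (β' : PA F (s+1)) (t' : F),
      z = (r'' + (bar (Fin.cons 1 y) - Pi.single (consProj y) 1)) + Pi.single β' t' := by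
  obtain ⟨r'', hr'', β', t', hsw⟩ := swB hr β t
  refine ⟨r'', hr'', β', t', ?_⟩
  rw [hz]
  linear_combination (norm := module) hsw

-- z near the unswitched component: some element of switched component is near z
lemma near_K {s : ℕ} {x : Fin s → F} {r z : PA F (s+1) → F} (hr : r ∈ Rcomp (consProj x))
    (β : PA F (s+1)) (t : F)
    (hz : z = (r + (bar (Fin.cons 1 x) - Pi.single (consProj x) 1)) + Pi.single β t) :
    ∃ r' ∈ Rcomp (consProj x), ∃ (β' : PA F (s+1)) (t' : F),
      z = (r' + bar (Fin.cons 1 x)) + Pi.single β' t' := by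
  obtain ⟨r', hr', β', t', hsw⟩ := swA hr β t
  refine ⟨r', hr', β', t', ?_⟩
  rw [hz]
  linear_combination (norm := module) hsw

-- ===== component disjointness =====

lemma comp_disjoint {s : ℕ} {C : Set (Fin s → F)} (hC : IsOneCode C)
    {x y : Fin s → F} (hx : x ∈ C) (hy : y ∈ C) (hxy : x ≠ y) {c : PA F (s+1) → F}
    {r r' : PA F (s+1) → F} (hr : r ∈ Rcomp (consProj x)) (hr' : r' ∈ Rcomp (consProj y))
    (hcx : c = r + (bar (Fin.cons 1 x) - Pi.single (consProj x) 1))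
    (hcy : c = r' + (bar (Fin.cons 1 y) - Pi.single (consProj y) 1)) : False := by
  obtain ⟨φ, hax, hay, hne⟩ := exists_phi (dist3 hC hx hy hxy)
  apply hne
  have hdiff : bar (Fin.cons 1 x) - bar (Fin.cons 1 y)
      - Pi.single (consProj x) 1 + Pi.single (consProj y) 1 = r' - r := by
    have h := hcx.symm.trans hcy
    linear_combination (norm := module) h
  rw [hdiff, map_sub, fl_vanish hay hr', fl_vanish hax hr, sub_zero]

lemma Rcomp_hcode {s : ℕ} {δ : PA F (s+1)} {r : PA F (s+1) → F} (hr : r ∈ Rcomp δ) :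
    r ∈ Hcode F (s+1) := mem_Hcode.2 (Rcomp_synd hr)

lemma mem_bigU {s : ℕ} {C : Set (Fin s → F)} {c : PA F (s+1) → F} :
    c ∈ (⋃ x ∈ C, compCoset x) ↔
      ∃ x ∈ C, ∃ r ∈ Rcomp (consProj x),
        c = r + (bar (Fin.cons 1 x) - Pi.single (consProj x) 1) := by
  rw [Set.mem_iUnion₂]
  constructor
  · rintro ⟨x, hx, hc⟩
    obtain ⟨r, hr, hrc⟩ := hc
    exact ⟨x, hx, r, hr, hrc.symm⟩
  · rintro ⟨x, hx, r, hr, rfl⟩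
    exact ⟨x, hx, ⟨r, hr, rfl⟩⟩

lemma mem_bigV {s : ℕ} {C : Set (Fin s → F)} {c : PA F (s+1) → F} :
    c ∈ (⋃ x ∈ C, (· + bar (Fin.cons 1 x)) '' (Rcomp (consProj x) : Set (PA F (s+1) → F))) ↔
      ∃ x ∈ C, ∃ r ∈ Rcomp (consProj x), c = r + bar (Fin.cons 1 x) := by
  rw [Set.mem_iUnion₂]
  constructor
  · rintro ⟨x, hx, hc⟩
    obtain ⟨r, hr, hrc⟩ := hc
    exact ⟨x, hx, r, hr, hrc.symm⟩
  · rintro ⟨x, hx, r, hr, rfl⟩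
    exact ⟨x, hx, ⟨r, hr, rfl⟩⟩

theorem stmt11 {s : ℕ} (C : Set (Fin s → F)) (hC : IsOneCode C) :
    IsPerfect (PCode C) ∧ C = {x : Fin s → F | bar (Fin.cons 1 x) ∈ PCode C} := by
  constructor
  · intro z
    obtain ⟨c, hcH, β, t, hz⟩ := hdecomp z
    by_cases hcS : c ∈ ⋃ x ∈ C, compCoset x
    · -- the Hamming codeword near z lies in a switched-out component
      obtain ⟨x, hxC, r, hr, hc⟩ := mem_bigU.1 hcS
      have hz1 : z = (r + (bar (Fin.cons 1 x) - Pi.single (consProj x) 1)) + Pi.single β t := by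
        rw [hz, hc]
      obtain ⟨r', hr', β', t', hz'⟩ := near_K hr β t hz1
      refine ⟨r' + bar (Fin.cons 1 x), ⟨?_, ?_⟩, ?_⟩
      · exact Or.inr (mem_bigV.2 ⟨x, hxC, r', hr', rfl⟩)
      · rw [hdist_le_one_iff]; exact ⟨β', t', hz'⟩
      · rintro c' ⟨hc'P, hc'd⟩
        rw [hdist_le_one_iff] at hc'd
        obtain ⟨β₂, t₂, hz₂⟩ := hc'd
        rcases hc'P with ⟨hc'H, hc'U⟩ | hc'V
        · exfalso
          have hcc : c' = c := hcode_unique hc'H hcH (hz₂.symm.trans hz)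
          exact hc'U (hcc ▸ hcS)
        · obtain ⟨y, hyC, ρ, hρ, hc'eq⟩ := mem_bigV.1 hc'V
          have hz2' : z = (ρ + bar (Fin.cons 1 y)) + Pi.single β₂ t₂ := by rw [hz₂, hc'eq]
          obtain ⟨r'', hr'', β₃, t₃, hz₃⟩ := near_T hρ β₂ t₂ hz2'
          have hcy : c = r'' + (bar (Fin.cons 1 y) - Pi.single (consProj y) 1) :=
            hcode_unique hcH (Kc_mem hr'') (hz.symm.trans hz₃)
          by_cases hxy : x = y
          · subst hxy
            have h12 : (ρ + bar (Fin.cons 1 x)) + Pi.single β₂ t₂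
                = (r' + bar (Fin.cons 1 x)) + Pi.single β' t' := by
              rw [← hc'eq, ← hz₂, hz']
            have hρr : ρ + Pi.single β₂ t₂ = r' + Pi.single β' t' := by
              linear_combination (norm := module) h12
            have : ρ = r' := hcode_unique (Rcomp_hcode hρ) (Rcomp_hcode hr') hρr
            rw [hc'eq, this]
          · exact absurd (comp_disjoint hC hxC hyC hxy hr hr'' hc hcy) id
    · -- the Hamming codeword near z survives in the code
      refine ⟨c, ⟨Or.inl ⟨hcH, hcS⟩, ?_⟩, ?_⟩
      · rw [hdist_le_one_iff]; exact ⟨β, t, hz⟩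
      · rintro c' ⟨hc'P, hc'd⟩
        rw [hdist_le_one_iff] at hc'd
        obtain ⟨β₂, t₂, hz₂⟩ := hc'd
        rcases hc'P with ⟨hc'H, -⟩ | hc'V
        · exact hcode_unique hc'H hcH (hz₂.symm.trans hz)
        · exfalso
          obtain ⟨y, hyC, ρ, hρ, hc'eq⟩ := mem_bigV.1 hc'V
          have hz2' : z = (ρ + bar (Fin.cons 1 y)) + Pi.single β₂ t₂ := by rw [hz₂, hc'eq]
          obtain ⟨r'', hr'', β₃, t₃, hz₃⟩ := near_T hρ β₂ t₂ hz2'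
          have hcy : c = r'' + (bar (Fin.cons 1 y) - Pi.single (consProj y) 1) :=
            hcode_unique hcH (Kc_mem hr'') (hz.symm.trans hz₃)
          exact hcS (mem_bigU.2 ⟨y, hyC, r'', hr'', hcy⟩)
  · ext x
    simp only [Set.mem_setOf_eq]
    constructor
    · intro hx
      exact Or.inr (mem_bigV.2 ⟨x, hx, 0, zero_mem _, by rw [zero_add]⟩)
    · intro hmem
      rcases hmem with ⟨hbH, -⟩ | hV
      · exfalso
        rw [mem_Hcode, synd_bar] at hbH
        have h0 := congrFun hbH 0
        rw [Fin.cons_zero, Pi.zero_apply] at h0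
        exact one_ne_zero h0
      · obtain ⟨y, hyC, r, hr, heq⟩ := mem_bigV.1 hV
        have hsynd : (Fin.cons 1 x : Fin (s+1) → F) = Fin.cons 1 y := by
          have hh := congrArg synd heq
          rw [synd_bar, synd_add, Rcomp_synd hr, zero_add, synd_bar] at hh
          exact hh
        have hxy : x = y := by
          funext i
          have := congrFun hsynd (Fin.succ i)
          simpa [Fin.cons_succ] using this
        rwa [hxy]
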